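/- Let U be a finite set, k ≥ 1, and f : 2^U → ℝ a nonnegative monotone set function with f(∅) = 0 (f(A) ≤ f(B) whenever A ⊆ B). Let S₀ = ∅ and, for 0 ≤ i < k, let S_{i+1} = S_i ∪ {x_i} where x_i ∈ U maximizes f(S_i ∪ {x}) over x ∈ U. Let OPT ⊆ U with |OPT| ≤ k, and suppose there is γ ∈ (0,1] such that for every 0 ≤ i < k, Σ_{x ∈ OPT} [f(S_i ∪ {x}) − f(S_i)] ≥ γ·[f(S_i ∪ OPT) − f(S_i)]. Then f(S_k) ≥ (1 − e^{−γ})·f(OPT). -/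

import Mathlib

open Matrix Finset

attribute [local instance 10] Classical.propDecidable

variable {V : Type*}

/-- The signed Laplacian of a signed graph `(G, σ)`: diagonal entries are vertex degrees,
and for `i ≠ j` the entry is `-σ i j` if `(i,j)` is an edge and `0` otherwise. -/
noncomputable def signedLaplacian [Fintype V] [DecidableEq V] (G : SimpleGraph V)
    (σ : V → V → ℝ) : Matrix V V ℝ :=
  Matrix.of fun i j =>
    if i = j then (G.degree i : ℝ) else if G.Adj i j then -σ i j else 0

/-- A signed graph is balanced if the vertices can be partitioned into `S` and `Sᶜ` so that
edges inside a part are positive and edges across parts are negative. -/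
def IsBalanced (G : SimpleGraph V) (σ : V → V → ℝ) : Prop :=
  ∃ S : Set V, ∀ i j, G.Adj i j → (σ i j = 1 ↔ (i ∈ S ↔ j ∈ S))

/-- The induced (signed) subgraph on vertex set `W` is balanced. -/
def IsBalancedOn (G : SimpleGraph V) (σ : V → V → ℝ) (W : Set V) : Prop :=
  ∃ S : Set V, ∀ i ∈ W, ∀ j ∈ W, G.Adj i j → (σ i j = 1 ↔ (i ∈ S ↔ j ∈ S))

/-- Current balance `Δ`: the maximum number of vertices of an induced subgraph that is
connected and balanced. -/
noncomputable def currentBalance [Fintype V] (G : SimpleGraph V) (σ : V → V → ℝ) : ℕ :=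
  sSup {k : ℕ | ∃ W : Set V, W.ncard = k ∧ (G.induce W).Connected ∧ IsBalancedOn G σ W}

/-- Frustration number `ν`: minimum number of vertices whose deletion leaves a balanced graph. -/
noncomputable def frustrationNumber [Fintype V] (G : SimpleGraph V) (σ : V → V → ℝ) : ℕ :=
  sInf {k : ℕ | ∃ D : Set V, D.ncard = k ∧ IsBalancedOn G σ Dᶜ}

/-- Frustration index `ε`: minimum number of edges whose deletion leaves a balanced graph. -/
noncomputable def frustrationIndex [Fintype V] (G : SimpleGraph V) (σ : V → V → ℝ) : ℕ :=
  sInf {k : ℕ | ∃ X : Set (Sym2 V), X ⊆ G.edgeSet ∧ X.ncard = k ∧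
    IsBalanced (G.deleteEdges X) σ}

/-- The smallest eigenvalue of a Hermitian (real symmetric) matrix. -/
noncomputable def smallestEigenvalue [Fintype V] [DecidableEq V] {A : Matrix V V ℝ}
    (hA : A.IsHermitian) : ℝ :=
  ⨅ i, hA.eigenvalues i

/-- The function on unordered edges `{i, j} ↦ (v i - σ i j * v j)^2`. -/
noncomputable def edgeWeight (σ : V → V → ℝ) (hsym : ∀ i j, σ i j = σ j i)
    (hsign : ∀ i j, σ i j = 1 ∨ σ i j = -1) (v : V → ℝ) : Sym2 V → ℝ :=
  Sym2.lift ⟨fun i j => (v i - σ i j * v j) ^ 2, fun a b => by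
    show (v a - σ a b * v b) ^ 2 = (v b - σ b a * v a) ^ 2
    rw [hsym b a]
    rcases hsign a b with h | h <;> rw [h] <;> ring⟩

/-- Greedy approximation guarantee for a nonnegative monotone set
function satisfying a local pseudo-submodularity condition with ratio `γ` along the
greedy trajectory: `f(S_k) ≥ (1 − e^{−γ})·f(OPT)`. -/
theorem greedy_pseudo_submodular_approximation {U : Type*} [Fintype U] [DecidableEq U]
    (f : Finset U → ℝ) (k : ℕ) (hk : 1 ≤ k)
    (hnonneg : ∀ A : Finset U, 0 ≤ f A) (hempty : f ∅ = 0)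
    (hmono : ∀ A B : Finset U, A ⊆ B → f A ≤ f B)
    (S : ℕ → Finset U) (hS0 : S 0 = ∅)
    (hstep : ∀ i < k, ∃ x : U, S (i + 1) = insert x (S i) ∧
      ∀ y : U, f (insert y (S i)) ≤ f (insert x (S i)))
    (OPT : Finset U) (hOPT : OPT.card ≤ k)
    (γ : ℝ) (hγ0 : 0 < γ) (hγ1 : γ ≤ 1)
    (hps : ∀ i < k,
      ∑ x ∈ OPT, (f (insert x (S i)) - f (S i)) ≥ γ * (f (S i ∪ OPT) - f (S i))) :
    f (S k) ≥ (1 - Real.exp (-γ)) * f OPT := by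
  have hkpos : (0:ℝ) < (k:ℝ) := by exact_mod_cast Nat.lt_of_lt_of_le Nat.zero_lt_one hk
  set c : ℝ := 1 - γ / k with hc
  have hc0 : 0 ≤ c := by
    rw [hc, sub_nonneg, div_le_one hkpos]
    calc γ ≤ 1 := hγ1
      _ ≤ (k:ℝ) := by exact_mod_cast hk
  -- one-step contraction
  have step : ∀ i < k, f OPT - f (S (i+1)) ≤ c * (f OPT - f (S i)) := by
    intro i hi
    obtain ⟨x, hx1, hx2⟩ := hstep i hi
    have hgain0 : 0 ≤ f (S (i+1)) - f (S i) := by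
      have := hmono (S i) (S (i+1)) (by rw [hx1]; exact Finset.subset_insert _ _)
      linarith
    have hsum : ∑ y ∈ OPT, (f (insert y (S i)) - f (S i))
        ≤ (OPT.card : ℝ) * (f (S (i+1)) - f (S i)) := by
      rw [← nsmul_eq_mul]
      apply Finset.sum_le_card_nsmul
      intro y _
      have := hx2 y
      rw [← hx1] at this
      linarith
    have hcard : (OPT.card : ℝ) * (f (S (i+1)) - f (S i))
        ≤ (k:ℝ) * (f (S (i+1)) - f (S i)) := by
      apply mul_le_mul_of_nonneg_right _ hgain0
      exact_mod_cast hOPT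
    have hunion : f OPT ≤ f (S i ∪ OPT) := hmono _ _ Finset.subset_union_right
    have hps' := hps i hi
    have key : γ * (f OPT - f (S i)) ≤ (k:ℝ) * (f (S (i+1)) - f (S i)) := by
      calc γ * (f OPT - f (S i)) ≤ γ * (f (S i ∪ OPT) - f (S i)) := by nlinarith
        _ ≤ ∑ y ∈ OPT, (f (insert y (S i)) - f (S i)) := hps'
        _ ≤ (OPT.card : ℝ) * (f (S (i+1)) - f (S i)) := hsum
        _ ≤ (k:ℝ) * (f (S (i+1)) - f (S i)) := hcard
    rw [← mul_le_mul_iff_right₀ hkpos]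
    have hrw : (k:ℝ) * (c * (f OPT - f (S i))) = ((k:ℝ) - γ) * (f OPT - f (S i)) := by
      rw [hc]; field_simp
    rw [hrw]
    nlinarith [key]
  -- iterate
  have iter : ∀ i ≤ k, f OPT - f (S i) ≤ c ^ i * f OPT := by
    intro i hi
    induction i with
    | zero => simp [hS0, hempty]
    | succ n ih =>
      have hn : n < k := Nat.lt_of_succ_le hi
      calc f OPT - f (S (n+1)) ≤ c * (f OPT - f (S n)) := step n hn
        _ ≤ c * (c ^ n * f OPT) := by
            apply mul_le_mul_of_nonneg_left (ih (Nat.le_of_lt hn)) hc0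
        _ = c ^ (n+1) * f OPT := by ring
  have hfinal := iter k le_rfl
  -- c^k ≤ exp(-γ)
  have hck : c ^ k ≤ Real.exp (-γ) := by
    have h1 : c ≤ Real.exp (-(γ/k)) := by
      have := Real.add_one_le_exp (-(γ/k))
      rw [hc]; linarith
    calc c ^ k ≤ (Real.exp (-(γ/k))) ^ k := pow_le_pow_left₀ hc0 h1 k
      _ = Real.exp ((k:ℝ) * (-(γ/k))) := by rw [← Real.exp_nat_mul]
      _ = Real.exp (-γ) := by rw [mul_neg, mul_div_cancel₀ _ (ne_of_gt hkpos)]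
  have hOPT0 := hnonneg OPT
  nlinarith [mul_le_mul_of_nonneg_right hck hOPT0]
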